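/- Let f∂ be a nonzero element of Witt(R) with Weierstrass degree W(f) > 1. Then spec(f∂) = {0}: the only eigenvalue of ad(f∂) is 0, and its eigenspace is one-dimensional. -/

import Mathlib

open HahnSeries

variable {k : Type} [Field k] [CharZero k]

lemma deriv_coeff (g : LaurentSeries k) (n : ℤ) :
    (LaurentSeries.derivative k g).coeff n = (n + 1) • g.coeff (n + 1) := by
  rw [LaurentSeries.derivative_apply, LaurentSeries.hasseDeriv_coeff]
  norm_num [Ring.choose_one_right]

lemma mul_coeff_lo (x y : LaurentSeries k) (a b : ℤ)
    (hx : ∀ i < a, x.coeff i = 0) (hy : ∀ j < b, y.coeff j = 0) :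
    (x * y).coeff (a + b) = x.coeff a * y.coeff b := by
  rw [HahnSeries.coeff_mul]
  rcases eq_or_ne (x.coeff a * y.coeff b) 0 with h0 | h0
  · rw [h0]
    apply Finset.sum_eq_zero
    intro ij hij
    rw [Finset.mem_addAntidiagonal] at hij
    obtain ⟨h1, h2, h3⟩ := hij
    rcases lt_trichotomy ij.1 a with h | h | h
    · rw [hx _ h, zero_mul]
    · have : ij.2 = b := by omega
      rw [h, this, h0]
    · rw [hy ij.2 (by omega), mul_zero]
  · have hxa : x.coeff a ≠ 0 := fun h => h0 (by rw [h, zero_mul])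
    have hyb : y.coeff b ≠ 0 := fun h => h0 (by rw [h, mul_zero])
    rw [Finset.sum_eq_single_of_mem (a, b)]
    · rw [Finset.mem_addAntidiagonal]; exact ⟨hxa, hyb, rfl⟩
    · intro ij hij hne
      rw [Finset.mem_addAntidiagonal] at hij
      obtain ⟨h1, h2, h3⟩ := hij
      rcases lt_trichotomy ij.1 a with h | h | h
      · rw [hx _ h, zero_mul]
      · exact absurd (Prod.ext h (by omega)) hne
      · rw [hy ij.2 (by omega), mul_zero]

lemma mul_coeff_zero_lo (x y : LaurentSeries k) (a b t : ℤ)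
    (hx : ∀ i < a, x.coeff i = 0) (hy : ∀ j < b, y.coeff j = 0) (ht : t < a + b) :
    (x * y).coeff t = 0 := by
  rw [HahnSeries.coeff_mul]
  apply Finset.sum_eq_zero
  intro ij hij
  rw [Finset.mem_addAntidiagonal] at hij
  obtain ⟨h1, h2, h3⟩ := hij
  rcases lt_or_ge ij.1 a with h | h
  · rw [hx _ h, zero_mul]
  · rw [hy ij.2 (by omega), mul_zero]

lemma deriv_lo (g : LaurentSeries k) : ∀ j < g.order - 1,
    (LaurentSeries.derivative k g).coeff j = 0 := by
  intro j hj
  rw [deriv_coeff]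
  rw [HahnSeries.coeff_eq_zero_of_lt_order (by omega), smul_zero]

lemma order_eq_of (f g : LaurentSeries k) (hf : f ≠ 0) (hg : g ≠ 0)
    (h : f * LaurentSeries.derivative k g - g * LaurentSeries.derivative k f = 0) :
    g.order = f.order := by
  set m := f.order with hm
  set n := g.order with hn
  have h1 : (f * LaurentSeries.derivative k g).coeff (m + (n - 1)) =
      f.coeff m * ((n : ℤ) • g.coeff n) := by
    rw [mul_coeff_lo f _ m (n-1) (fun i hi => HahnSeries.coeff_eq_zero_of_lt_order hi)
      (deriv_lo g), deriv_coeff]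
    norm_num
  have h2 : (g * LaurentSeries.derivative k f).coeff (n + (m - 1)) =
      g.coeff n * ((m : ℤ) • f.coeff m) := by
    rw [mul_coeff_lo g _ n (m-1) (fun i hi => HahnSeries.coeff_eq_zero_of_lt_order hi)
      (deriv_lo f), deriv_coeff]
    norm_num
  have heq : (f * LaurentSeries.derivative k g).coeff (m + (n - 1)) =
      (g * LaurentSeries.derivative k f).coeff (n + (m - 1)) := by
    have := congrArg (fun x : LaurentSeries k => x.coeff (m + (n - 1))) h
    simp only [HahnSeries.coeff_sub, Pi.sub_apply, HahnSeries.coeff_zero, sub_eq_zero] at this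
    rw [this]; congr 1; ring
  rw [h1, h2] at heq
  simp only [zsmul_eq_mul] at heq
  have key : ((n - m : ℤ)) • (f.coeff m * g.coeff n) = 0 := by
    simp only [zsmul_eq_mul]
    push_cast
    linear_combination heq
  have hne : f.coeff m * g.coeff n ≠ 0 :=
    mul_ne_zero ((HahnSeries.coeff_order_eq_zero.not.mpr hf)) ((HahnSeries.coeff_order_eq_zero.not.mpr hg))
  rcases smul_eq_zero.mp key with h' | h'
  · omega
  · exact absurd h' hne

lemma LSsmulmul (c : k) (x y : LaurentSeries k) : (c • x) * y = c • (x * y) := by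
  rw [← HahnSeries.C_mul_eq_smul, ← HahnSeries.C_mul_eq_smul, mul_assoc]

lemma LSmulsmul (c : k) (x y : LaurentSeries k) : x * (c • y) = c • (x * y) := by
  rw [← HahnSeries.C_mul_eq_smul, ← HahnSeries.C_mul_eq_smul]
  ring

/-- If `f∂ ∈ Witt(R)` is nonzero with Weierstrass degree `W(f) > 1`, then the only
eigenvalue of `ad(f∂)` is `0`, and the `0`-eigenspace is the one-dimensional space
spanned by `f∂`. -/
theorem stmt14 {k : Type} [Field k] [CharZero k]
    (f : LaurentSeries k) (hf : f ≠ 0) (horder : 1 < f.order) :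
    (∀ a : k, (∃ g : LaurentSeries k, g ≠ 0 ∧
        f * LaurentSeries.derivative k g - g * LaurentSeries.derivative k f = a • g) →
      a = 0) ∧
    {g : LaurentSeries k |
        f * LaurentSeries.derivative k g - g * LaurentSeries.derivative k f = 0}
      = {g : LaurentSeries k | ∃ c : k, g = c • f} := by
  constructor
  · rintro a ⟨g, hg, heq⟩
    by_contra ha
    set n := g.order with hn
    have h1 : (f * LaurentSeries.derivative k g).coeff n = 0 :=
      mul_coeff_zero_lo f _ f.order (n - 1) n
        (fun i hi => HahnSeries.coeff_eq_zero_of_lt_order hi) (deriv_lo g) (by omega)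
    have h2 : (g * LaurentSeries.derivative k f).coeff n = 0 :=
      mul_coeff_zero_lo g _ n (f.order - 1) n
        (fun i hi => HahnSeries.coeff_eq_zero_of_lt_order hi) (deriv_lo f) (by omega)
    have := congrArg (fun x : LaurentSeries k => x.coeff n) heq
    simp only [HahnSeries.coeff_sub, Pi.sub_apply, HahnSeries.coeff_smul, h1, h2] at this
    have : a * g.coeff n = 0 := by rw [← smul_eq_mul, ← this]; ring
    rcases mul_eq_zero.mp this with h' | h'
    · exact ha h'
    · exact (HahnSeries.coeff_order_eq_zero.not.mpr hg) h'
  · ext g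
    simp only [Set.mem_setOf_eq]
    constructor
    · intro h
      rcases eq_or_ne g 0 with hg | hg
      · exact ⟨0, by rw [hg, zero_smul]⟩
      have hord : g.order = f.order := order_eq_of f g hf hg h
      set c : k := g.coeff g.order / f.coeff f.order with hc
      refine ⟨c, ?_⟩
      by_contra hne
      set h' : LaurentSeries k := g - c • f with hh
      have hne' : h' ≠ 0 := fun hz => hne (by rwa [hh, sub_eq_zero] at hz)
      have heq' : f * LaurentSeries.derivative k h' - h' * LaurentSeries.derivative k f = 0 := by
        rw [hh, map_sub, map_smul]
        rw [sub_eq_zero] at h ⊢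
        rw [mul_sub, sub_mul, LSsmulmul c, LSmulsmul c, h]
      have hord' : h'.order = f.order := order_eq_of f h' hf hne' heq'
      have : h'.coeff f.order = 0 := by
        rw [hh]
        simp only [HahnSeries.coeff_sub, Pi.sub_apply, HahnSeries.coeff_smul, hc, hord,
          smul_eq_mul]
        rw [div_mul_cancel₀ _ ((HahnSeries.coeff_order_eq_zero.not.mpr hf)), sub_self]
      exact (HahnSeries.coeff_order_eq_zero.not.mpr hne') (hord' ▸ this)
    · rintro ⟨c, rfl⟩
      rw [map_smul, LSmulsmul c, LSsmulmul c]
      ring
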